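/- arXiv:1712.08404 — 4 statements merged into one kernel-verified Lean document; each statement's English description precedes it below -/
import Mathlib

section
/- In the weighted set cover problem, the greedy algorithm that repeatedly selects the set minimizing cost per newly covered element produces a cover whose cost is at most (1 + log N) times the optimal cost, where N is the size of the universe. -/
open Finset in
lemma harm_lb {m r : ℕ} (h : m ≤ r) :
    ((r : ℝ) - (m : ℝ)) / r ≤ (harmonic r : ℝ) - (harmonic m : ℝ) := by
  rcases Nat.eq_zero_or_pos r with hr | hr
  · subst hr; interval_cases m; simp
  · have hdiff : (harmonic r : ℝ) - (harmonic m : ℝ)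
        = ∑ i ∈ Finset.Ico m r, ((i : ℝ) + 1)⁻¹ := by
      have := Finset.sum_Ico_eq_sub (fun i : ℕ => ((i : ℝ) + 1)⁻¹) h
      simp only [harmonic]
      push_cast
      simpa using this.symm
    rw [hdiff, div_eq_mul_inv]
    calc ((r : ℝ) - m) * (r : ℝ)⁻¹ = ∑ _i ∈ Finset.Ico m r, (r : ℝ)⁻¹ := by
          rw [Finset.sum_const, Nat.card_Ico, nsmul_eq_mul, Nat.cast_sub h]
      _ ≤ ∑ i ∈ Finset.Ico m r, ((i : ℝ) + 1)⁻¹ := by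
          refine Finset.sum_le_sum fun i hi => ?_
          have hi' : (i : ℝ) + 1 ≤ r := by
            have := (Finset.mem_Ico.mp hi).2
            exact_mod_cast this
          exact inv_anti₀ (by positivity) hi'

lemma harm_nonneg (m : ℕ) : (0 : ℝ) ≤ (harmonic m : ℝ) := by
  rcases Nat.eq_zero_or_pos m with hm | hm
  · simp [hm]
  · exact_mod_cast (harmonic_pos hm.ne').le

lemma harm_mono {m n : ℕ} (h : m ≤ n) : (harmonic m : ℝ) ≤ (harmonic n : ℝ) := by
  have := harm_lb h
  have h2 : (0:ℝ) ≤ ((n:ℝ) - m)/n :=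
    div_nonneg (by simp; exact_mod_cast h) (by positivity)
  linarith

-- list helpers
lemma foldr_union_eq {α : Type*} [DecidableEq α] (l : List (Finset α)) (b : Finset α) :
    l.foldr (· ∪ ·) b = l.foldr (· ∪ ·) ∅ ∪ b := by
  induction l with
  | nil => simp
  | cons a t ih => simp [ih, Finset.union_assoc]

/-- The elements covered after the first `k` sets chosen by the greedy
algorithm. -/
def coveredBy {α : Type*} [DecidableEq α] (L : List (Finset α)) (k : ℕ) :
    Finset α :=
  (L.take k).foldr (· ∪ ·) ∅

lemma coveredBy_succ {α : Type*} [DecidableEq α] (L : List (Finset α)) {k : ℕ}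
    (hk : k < L.length) :
    coveredBy L (k + 1) = L.get ⟨k, hk⟩ ∪ coveredBy L k := by
  unfold coveredBy
  rw [List.take_succ, List.getElem?_eq_getElem hk]
  simp only [Option.toList_some, List.foldr_append, List.foldr_cons, List.foldr_nil]
  rw [foldr_union_eq]
  simp [Finset.union_comm, List.get_eq_getElem]

lemma foldr_union_subset {α : Type*} [DecidableEq α] {U : Finset α}
    (l : List (Finset α)) (h : ∀ S ∈ l, S ⊆ U) : l.foldr (· ∪ ·) ∅ ⊆ U := by
  induction l with
  | nil => simp
  | cons a t ih =>
      simp only [List.foldr_cons]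
      exact Finset.union_subset (h a (by simp)) (ih fun S hS => h S (by simp [hS]))

lemma map_sum_eq {α : Type*} [DecidableEq α] (w : Finset α → ℝ) (L : List (Finset α)) :
    (L.map w).sum = ∑ k ∈ Finset.range L.length, w (L.getD k ∅) := by
  induction L with
  | nil => simp
  | cons a t ih =>
      simp only [List.map_cons, List.sum_cons, List.length_cons]
      rw [Finset.sum_range_succ' (fun k => w ((a :: t).getD k ∅))]
      simp [ih, add_comm]

/-- In the weighted set cover problem with universe `U` of `N`
elements, family `P` of subsets covering `U` and nonnegative weights `w`, the
greedy algorithm that repeatedly selects a set minimizing cost per newly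
covered element produces a cover whose cost is at most `(1 + log N)` times
the cost of any cover, in particular of an optimal cover.  The greedy run is
recorded as a list `L` of chosen sets. -/
theorem stmt_1 {α : Type*} [DecidableEq α]
    (U : Finset α) (P : Finset (Finset α)) (w : Finset α → ℝ)
    (hw : ∀ S ∈ P, 0 ≤ w S)
    (hP : P.biUnion id = U)
    (L : List (Finset α))
    (hmem : ∀ S ∈ L, S ∈ P)
    (hnew : ∀ k : ℕ, (hk : k < L.length) →
      (L.get ⟨k, hk⟩ \ coveredBy L k).Nonempty)
    (hgreedy : ∀ k : ℕ, (hk : k < L.length) → ∀ S ∈ P,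
      (S \ coveredBy L k).Nonempty →
        w (L.get ⟨k, hk⟩) / ((L.get ⟨k, hk⟩ \ coveredBy L k).card : ℝ)
          ≤ w S / ((S \ coveredBy L k).card : ℝ))
    (hdone : U ⊆ coveredBy L L.length) :
    ∀ T ⊆ P, U ⊆ T.biUnion id →
      (L.map w).sum ≤ (1 + Real.log U.card) * ∑ S ∈ T, w S := by
  intro T hTP hTcov
  have hUsub : ∀ S ∈ P, S ⊆ U := fun S hS x hx => by
    rw [← hP]; exact Finset.mem_biUnion.mpr ⟨S, hS, hx⟩
  set n := L.length with hn
  have key : ∀ k ∈ Finset.range n, w (L.getD k ∅) ≤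
      ∑ S ∈ T, w S * ((harmonic (S \ coveredBy L k).card : ℝ)
        - (harmonic (S \ coveredBy L (k+1)).card : ℝ)) := by
    intro k hk
    rw [Finset.mem_range] at hk
    set a := L.get ⟨k, hk⟩ with ha
    have hgd : L.getD k ∅ = a := by
      rw [List.getD_eq_getElem?_getD, List.getElem?_eq_getElem hk]; rfl
    have haP : a ∈ P := hmem a (L.get_mem _)
    set C := coveredBy L k with hC
    have hCsucc : coveredBy L (k+1) = a ∪ C := coveredBy_succ L hk
    rw [hCsucc, hgd]
    set A := a \ C with hA
    have hAne : A.Nonempty := hnew k hk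
    have hApos : (0:ℝ) < A.card := by exact_mod_cast Finset.card_pos.mpr hAne
    set p := w a / A.card with hp
    have hp0 : 0 ≤ p := div_nonneg (hw a haP) hApos.le
    have hcard : (A.card : ℝ) ≤ ∑ S ∈ T, ((A ∩ S).card : ℝ) := by
      have h1 : A ⊆ T.biUnion (fun S => A ∩ S) := by
        intro x hx
        have hxU : x ∈ U := hUsub a haP (Finset.mem_sdiff.mp hx).1
        obtain ⟨S, hS, hxS⟩ := Finset.mem_biUnion.mp (hTcov hxU)
        exact Finset.mem_biUnion.mpr ⟨S, hS, Finset.mem_inter.mpr ⟨hx, hxS⟩⟩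
      calc (A.card : ℝ) ≤ ((T.biUnion fun S => A ∩ S).card : ℝ) := by
            exact_mod_cast Finset.card_le_card h1
        _ ≤ ∑ S ∈ T, ((A ∩ S).card : ℝ) := by exact_mod_cast Finset.card_biUnion_le
    have hperS : ∀ S ∈ T, p * ((A ∩ S).card : ℝ)
        ≤ w S * ((harmonic (S \ C).card : ℝ) - (harmonic (S \ (a ∪ C)).card : ℝ)) := by
      intro S hST
      have hSP := hTP hST
      have hsub : S \ (a ∪ C) ⊆ S \ C :=
        Finset.sdiff_subset_sdiff (le_refl S) Finset.subset_union_right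
      have hAS : A ∩ S = (S \ C) \ (S \ (a ∪ C)) := by
        ext x
        simp only [hA, Finset.mem_sdiff, Finset.mem_inter, Finset.mem_union]
        tauto
      have hle : (S \ (a ∪ C)).card ≤ (S \ C).card := Finset.card_le_card hsub
      have hcardAS : ((A ∩ S).card : ℝ)
          = ((S \ C).card : ℝ) - ((S \ (a ∪ C)).card : ℝ) := by
        rw [hAS, Finset.card_sdiff_of_subset hsub, Nat.cast_sub hle]
      rcases Finset.eq_empty_or_nonempty (S \ C) with hSC | hSC
      · have h0 : S \ (a ∪ C) = ∅ := Finset.subset_empty.mp (hSC ▸ hsub)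
        rw [hAS, hSC, h0]; simp
      · have hgr : p ≤ w S / (S \ C).card := hgreedy k hk S hSP hSC
        have hrpos : (0:ℝ) < (S \ C).card := by
          exact_mod_cast Finset.card_pos.mpr hSC
        calc p * ((A ∩ S).card : ℝ)
            ≤ (w S / (S \ C).card) * ((A ∩ S).card : ℝ) :=
              mul_le_mul_of_nonneg_right hgr (by positivity)
          _ = w S * (((A ∩ S).card : ℝ) / (S \ C).card) := by ring
          _ ≤ w S * ((harmonic (S \ C).card : ℝ) - (harmonic (S \ (a ∪ C)).card : ℝ)) := by
              refine mul_le_mul_of_nonneg_left ?_ (hw S hSP)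
              rw [hcardAS]
              exact harm_lb hle
    calc w a = p * A.card := by rw [hp]; field_simp
      _ ≤ p * ∑ S ∈ T, ((A ∩ S).card : ℝ) := mul_le_mul_of_nonneg_left hcard hp0
      _ = ∑ S ∈ T, p * ((A ∩ S).card : ℝ) := Finset.mul_sum _ _ _
      _ ≤ _ := Finset.sum_le_sum hperS
  calc (L.map w).sum = ∑ k ∈ Finset.range n, w (L.getD k ∅) := map_sum_eq w L
    _ ≤ ∑ k ∈ Finset.range n, ∑ S ∈ T, w S * ((harmonic (S \ coveredBy L k).card : ℝ)
          - (harmonic (S \ coveredBy L (k+1)).card : ℝ)) := Finset.sum_le_sum key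
    _ = ∑ S ∈ T, ∑ k ∈ Finset.range n, w S * ((harmonic (S \ coveredBy L k).card : ℝ)
          - (harmonic (S \ coveredBy L (k+1)).card : ℝ)) := Finset.sum_comm
    _ = ∑ S ∈ T, w S * ((harmonic (S \ coveredBy L 0).card : ℝ)
          - (harmonic (S \ coveredBy L n).card : ℝ)) := by
        refine Finset.sum_congr rfl fun S _ => ?_
        rw [← Finset.mul_sum,
          Finset.sum_range_sub' (fun k => (harmonic (S \ coveredBy L k).card : ℝ))]
    _ ≤ ∑ S ∈ T, w S * (1 + Real.log U.card) := by
        refine Finset.sum_le_sum fun S hS => mul_le_mul_of_nonneg_left ?_ (hw S (hTP hS))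
        have h1 : coveredBy L 0 = ∅ := rfl
        have h2 : (S \ coveredBy L 0).card ≤ U.card := by
          rw [h1]; simpa using Finset.card_le_card (hUsub S (hTP hS))
        calc (harmonic (S \ coveredBy L 0).card : ℝ)
              - (harmonic (S \ coveredBy L n).card : ℝ)
            ≤ (harmonic (S \ coveredBy L 0).card : ℝ) := by
              have := harm_nonneg (S \ coveredBy L n).card; linarith
          _ ≤ (harmonic U.card : ℝ) := harm_mono h2
          _ ≤ 1 + Real.log U.card := harmonic_le_one_add_log _
    _ = (1 + Real.log U.card) * ∑ S ∈ T, w S := by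
        rw [← Finset.sum_mul]; ring
end

section
/- Consider the optimal cycle selection problem: given a digraph D_R = (N ∪ V_U ∪ V_Y, E_N ∪ E'_U ∪ E'_Y ∪ E_min) with nonnegative costs on edges of E_min, find a minimum-cost subset Ê ⊆ E_min such that every node in N lies in at least one directed cycle of the digraph restricted to E_N ∪ E'_U ∪ E'_Y ∪ Ê. If E' is an ε-optimal solution to this cycle selection problem (c(E') ≤ ε·c(E_opt) for ε ≥ 1), then the corresponding feedback matrix K' with K'_{ij} = ⋆ iff (y_j,u_i) ∈ E' is an ε-optimal solution to the optimal feedback selection problem, i.e., P(K') ≤ ε·P(K*). -/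
section
variable {X : Type*} {m p : ℕ}

/-- Mutual reachability under the relation `R`. -/
def mreach {V : Type*} (R : V → V → Prop) (a b : V) : Prop :=
  Relation.ReflTransGen R a b ∧ Relation.ReflTransGen R b a

/-- Edge relation of the closed-loop digraph `D(Ā,B̄,C̄,K̄)` with dedicated
inputs and outputs and feedback edges `K` (pairs `(output, input)`). -/
def clEdge (EX : X → X → Prop) (fU : Fin m → X) (fY : Fin p → X)
    (K : Finset (Fin p × Fin m)) :
    (X ⊕ Fin m ⊕ Fin p) → (X ⊕ Fin m ⊕ Fin p) → Prop
  | Sum.inl a, Sum.inl b => EX a b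
  | Sum.inr (Sum.inl i), Sum.inl b => fU i = b
  | Sum.inl a, Sum.inr (Sum.inr j) => fY j = a
  | Sum.inr (Sum.inr j), Sum.inr (Sum.inl i) => (j, i) ∈ K
  | _, _ => False

/-- Equivalence identifying vertices of the same SCC of the state digraph. -/
def veq (EX : X → X → Prop) (v w : X ⊕ Fin m ⊕ Fin p) : Prop :=
  (∃ a b : X, v = Sum.inl a ∧ w = Sum.inl b ∧ mreach EX a b) ∨ v = w

/-- Edge relation of the condensed digraph. -/
def cedge (EX : X → X → Prop) (fU : Fin m → X) (fY : Fin p → X)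
    (K : Finset (Fin p × Fin m)) (v w : X ⊕ Fin m ⊕ Fin p) : Prop :=
  ¬ veq EX v w ∧ ∃ v' w', veq EX v v' ∧ veq EX w w' ∧ clEdge EX fU fY K v' w'

/-- The condensed node of the state `x` lies on a directed cycle of the
condensed digraph augmented with `K`. -/
def classOnCycle (EX : X → X → Prop) (fU : Fin m → X) (fY : Fin p → X)
    (K : Finset (Fin p × Fin m)) (x : X) : Prop :=
  ∃ v, cedge EX fU fY K (Sum.inl x) v ∧
    Relation.ReflTransGen (cedge EX fU fY K) v (Sum.inl x)

/-- The state `x` lies in an SCC of the closed-loop digraph containing a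
feedback edge of `K`. -/
def coveredState (EX : X → X → Prop) (fU : Fin m → X) (fY : Fin p → X)
    (K : Finset (Fin p × Fin m)) (x : X) : Prop :=
  ∃ e ∈ K, mreach (clEdge EX fU fY K) (Sum.inl x) (Sum.inr (Sum.inr e.1)) ∧
    mreach (clEdge EX fU fY K) (Sum.inl x) (Sum.inr (Sum.inl e.2))

/-- Cost of a set of feedback edges under the feedback cost matrix `P`
(`P i j` is the cost of feeding output `j` to input `i`). -/
def fcost (P : Fin m → Fin p → ℝ) (K : Finset (Fin p × Fin m)) : ℝ :=
  ∑ e ∈ K, P e.2 e.1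

end



section Aux
variable {X : Type*} {m p : ℕ} {EX : X → X → Prop} {fU : Fin m → X} {fY : Fin p → X}

lemma mreach_refl {V : Type*} {R : V → V → Prop} (a : V) : mreach R a a :=
  ⟨.refl, .refl⟩

lemma mreach_symm {V : Type*} {R : V → V → Prop} {a b : V} (h : mreach R a b) :
    mreach R b a := ⟨h.2, h.1⟩

lemma mreach_trans {V : Type*} {R : V → V → Prop} {a b c : V} (h : mreach R a b)
    (h' : mreach R b c) : mreach R a c := ⟨h.1.trans h'.1, h'.2.trans h.2⟩

lemma veq_refl (v : X ⊕ Fin m ⊕ Fin p) : veq EX v v := Or.inr rfl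

lemma veq_inl {a b : X} (h : mreach EX a b) :
    veq (m := m) (p := p) EX (Sum.inl a) (Sum.inl b) := Or.inl ⟨a, b, rfl, rfl, h⟩

lemma veq_inl_iff {a b : X} :
    veq (m := m) (p := p) EX (Sum.inl a) (Sum.inl b) ↔ mreach EX a b := by
  constructor
  · rintro (⟨a', b', ha, hb, h⟩ | h)
    · cases ha; cases Sum.inl_injective hb; exact h
    · cases Sum.inl_injective h; exact mreach_refl _
  · exact veq_inl

lemma veq_symm {v w : X ⊕ Fin m ⊕ Fin p} (h : veq EX v w) : veq EX w v := by
  rcases h with ⟨a, b, rfl, rfl, h⟩ | rfl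
  · exact veq_inl (mreach_symm h)
  · exact veq_refl _

lemma veq_trans {u v w : X ⊕ Fin m ⊕ Fin p} (h : veq EX u v) (h' : veq EX v w) :
    veq EX u w := by
  rcases h with ⟨a, b, rfl, rfl, h⟩ | rfl
  · rcases h' with ⟨b', c, hb, rfl, h'⟩ | rfl
    · cases Sum.inl_injective hb; exact veq_inl (mreach_trans h h')
    · exact veq_inl h
  · exact h'

lemma cedge_congr_left {K : Finset (Fin p × Fin m)} {v v' w : X ⊕ Fin m ⊕ Fin p}
    (hv : veq EX v v') (h : cedge EX fU fY K v w) : cedge EX fU fY K v' w := by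
  obtain ⟨hne, u, u', hu, hu', he⟩ := h
  exact ⟨fun hc => hne (veq_trans hv hc), u, u',
    veq_trans (veq_symm hv) hu, hu', he⟩

lemma rtg_cedge_retarget {K : Finset (Fin p × Fin m)} {u w w' : X ⊕ Fin m ⊕ Fin p}
    (h : Relation.ReflTransGen (cedge EX fU fY K) u w) (hw : veq EX w w')
    (hu : ¬ veq EX u w') : Relation.ReflTransGen (cedge EX fU fY K) u w' := by
  rcases h.cases_tail with rfl | ⟨y, hy, hstep⟩
  · exact absurd hw hu
  · obtain ⟨hne, v', w₀', hv, hw₀, he⟩ := hstep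
    exact hy.tail ⟨fun hc => hne (veq_trans hc (veq_symm hw)), v', w₀', hv,
      veq_trans (veq_symm hw) hw₀, he⟩

/-- Compatibility between a vertex of the closed-loop digraph and a state. -/
def compat (EX : X → X → Prop) (fU : Fin m → X) (fY : Fin p → X) :
    (X ⊕ Fin m ⊕ Fin p) → X → Prop
  | Sum.inl c, b => mreach EX c b
  | Sum.inr (Sum.inl i), b => mreach EX (fU i) b
  | Sum.inr (Sum.inr j), b => mreach EX (fY j) b

lemma sim {K E₁ : Finset (Fin p × Fin m)}
    (hrep : ∀ e ∈ K, ∃ e' ∈ E₁,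
      mreach EX (fY e.1) (fY e'.1) ∧ mreach EX (fU e.2) (fU e'.2))
    {z₁ z₂ : X ⊕ Fin m ⊕ Fin p}
    (h : Relation.ReflTransGen (clEdge EX fU fY K) z₁ z₂) :
    ∀ b₁, compat EX fU fY z₁ b₁ → ∃ b₂, compat EX fU fY z₂ b₂ ∧
      Relation.ReflTransGen (cedge EX fU fY E₁) (Sum.inl b₁) (Sum.inl b₂) := by
  induction h with
  | refl => exact fun b₁ hb => ⟨b₁, hb, .refl⟩
  | @tail y z hy hstep ih =>
    intro b₁ hb₁
    obtain ⟨b₂, hb₂, hpath⟩ := ih b₁ hb₁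
    rcases y with a | i | j <;> rcases z with b | i' | j'
    all_goals first
      | exact hstep.elim
      | skip
    · -- state → state, EX a b
      have hab : EX a b := hstep
      by_cases hm : mreach EX a b
      · exact ⟨b₂, mreach_trans (mreach_symm hm) hb₂, hpath⟩
      · refine ⟨b, mreach_refl b, hpath.tail ?_⟩
        refine ⟨fun hc => hm (mreach_trans hb₂ ((veq_inl_iff).1 hc)), Sum.inl a,
          Sum.inl b, veq_inl (mreach_symm hb₂), veq_refl _, hab⟩
    · -- state → output, fY j' = a
      have hj : fY j' = a := hstep
      exact ⟨b₂, by rw [show compat EX fU fY (Sum.inr (Sum.inr j')) b₂ = mreach EX (fY j') b₂ from rfl, hj]; exact hb₂, hpath⟩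
    · -- input → state, fU i = b
      have hi : fU i = b := hstep
      exact ⟨b₂, by rw [show compat EX fU fY (Sum.inl b) b₂ = mreach EX b b₂ from rfl, ← hi]; exact hb₂, hpath⟩
    · -- output → input, (j, i') ∈ K
      have hk : (j, i') ∈ K := hstep
      obtain ⟨e', he'E, hYe, hUe⟩ := hrep _ hk
      refine ⟨fU e'.2, hUe, ?_⟩
      have h1 : cedge EX fU fY E₁ (Sum.inl b₂) (Sum.inr (Sum.inr e'.1)) := by
        refine ⟨?_, Sum.inl (fY e'.1), Sum.inr (Sum.inr e'.1),
          veq_inl (mreach_trans (mreach_symm hb₂) hYe), veq_refl _, rfl⟩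
        rintro (⟨_, _, _, h, _⟩ | h) <;> simp at h
      have h2 : cedge EX fU fY E₁ (Sum.inr (Sum.inr e'.1)) (Sum.inr (Sum.inl e'.2)) := by
        refine ⟨?_, _, _, veq_refl _, veq_refl _, (by exact he'E : clEdge EX fU fY E₁ (Sum.inr (Sum.inr e'.1)) (Sum.inr (Sum.inl e'.2)))⟩
        rintro (⟨_, _, h, _⟩ | h) <;> simp at h
      have h3 : cedge EX fU fY E₁ (Sum.inr (Sum.inl e'.2)) (Sum.inl (fU e'.2)) := by
        refine ⟨?_, _, _, veq_refl _, veq_refl _, (rfl : fU e'.2 = fU e'.2)⟩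
        rintro (⟨_, _, h, _⟩ | h) <;> simp at h
      exact ((hpath.tail h1).tail h2).tail h3

lemma sum_image_le' {ι κ : Type*} [DecidableEq ι] [DecidableEq κ] (s : Finset ι) (f : ι → κ)
    (g : κ → ℝ) (hg : ∀ i, 0 ≤ g (f i)) :
    ∑ a ∈ s.image f, g a ≤ ∑ i ∈ s, g (f i) := by
  induction s using Finset.induction with
  | empty => simp
  | @insert a s ha ih =>
    rw [Finset.image_insert, Finset.sum_insert ha]
    by_cases hfa : f a ∈ s.image f
    · rw [Finset.insert_eq_self.2 hfa]
      exact le_add_of_nonneg_left (hg a) |>.trans' ih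
    · rw [Finset.sum_insert hfa]
      exact add_le_add (le_refl _) ih

end Aux
section Aux2
variable {X : Type*} {m p : ℕ} {EX : X → X → Prop} {fU : Fin m → X} {fY : Fin p → X}
  {E₁ : Finset (Fin p × Fin m)}

lemma cedge_state_out {b : X} {j' : Fin p} (hb : mreach EX b (fY j')) :
    cedge EX fU fY E₁ (Sum.inl b) (Sum.inr (Sum.inr j')) := by
  refine ⟨?_, Sum.inl (fY j'), Sum.inr (Sum.inr j'), veq_inl hb, veq_refl _, rfl⟩
  rintro (⟨_, _, _, h, _⟩ | h) <;> simp at h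

lemma cedge_out_in {e' : Fin p × Fin m} (h : e' ∈ E₁) :
    cedge EX fU fY E₁ (Sum.inr (Sum.inr e'.1)) (Sum.inr (Sum.inl e'.2)) := by
  refine ⟨?_, _, _, veq_refl _, veq_refl _,
    (by exact h : clEdge EX fU fY E₁ (Sum.inr (Sum.inr e'.1)) (Sum.inr (Sum.inl e'.2)))⟩
  rintro (⟨_, _, h', _⟩ | h') <;> simp at h'

lemma cedge_in_state (i' : Fin m) :
    cedge EX fU fY E₁ (Sum.inr (Sum.inl i')) (Sum.inl (fU i')) := by
  refine ⟨?_, _, _, veq_refl _, veq_refl _, (rfl : fU i' = fU i')⟩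
  rintro (⟨_, _, h', _⟩ | h') <;> simp at h'

lemma cedge_in_state' {i' : Fin m} {x : X} (hx : veq (m := m) (p := p) EX (Sum.inl (fU i')) (Sum.inl x)) :
    cedge EX fU fY E₁ (Sum.inr (Sum.inl i')) (Sum.inl x) := by
  refine ⟨?_, Sum.inr (Sum.inl i'), Sum.inl (fU i'), veq_refl _, veq_symm hx,
    (rfl : fU i' = fU i')⟩
  rintro (⟨_, _, h', _⟩ | h') <;> simp at h'

end Aux2

/-- Optimal cycle selection problem: find a minimum-cost subset
`Ê ⊆ E_min` so that every condensed node lies on a directed cycle of the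
condensed digraph augmented with `Ê`.  If `E'` is an ε-optimal solution of
the cycle selection problem (`c(E') ≤ ε·c(E_opt)`, `ε ≥ 1`), then the
corresponding feedback matrix `K'` (with `K'_{ij} = ⋆` iff `(y_j,u_i) ∈ E'`)
is an ε-optimal solution of the optimal feedback selection problem:
`P(K') ≤ ε·P(K*)`.  Here `E_min` contains, for each pair of SCCs joined by a
feasible feedback edge, a minimum-cost such edge, the cost matrix is
nonnegative, and (the bipartite graph `B(Ā)` having a perfect matching)
feasibility of a feedback matrix is the condition that every state lie in an
SCC of the closed-loop digraph containing a feedback edge. -/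
theorem stmt_4 {X : Type*} {m p : ℕ}
    (EX : X → X → Prop) (fU : Fin m → X) (fY : Fin p → X)
    (P : Fin m → Fin p → ℝ) (hP : ∀ i j, 0 ≤ P i j)
    (Emin : Finset (Fin p × Fin m))
    -- `Emin` keeps a minimum-cost feedback edge between each pair of SCCs
    (hEmin : ∀ j : Fin p, ∀ i : Fin m, ∃ e ∈ Emin,
      P e.2 e.1 ≤ P i j ∧ mreach EX (fY j) (fY e.1) ∧ mreach EX (fU i) (fU e.2))
    -- an optimal solution of the cycle selection problem
    (Eopt : Finset (Fin p × Fin m)) (hEopt_sub : Eopt ⊆ Emin)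
    (hEopt_feas : ∀ x : X, classOnCycle EX fU fY Eopt x)
    (hEopt_opt : ∀ E₁ ⊆ Emin, (∀ x : X, classOnCycle EX fU fY E₁ x) →
      fcost P Eopt ≤ fcost P E₁)
    -- an optimal solution of the feedback selection problem
    (Kstar : Finset (Fin p × Fin m))
    (hK_feas : ∀ x : X, coveredState EX fU fY Kstar x)
    (hK_opt : ∀ K : Finset (Fin p × Fin m),
      (∀ x : X, coveredState EX fU fY K x) → fcost P Kstar ≤ fcost P K)
    -- an ε-optimal solution of the cycle selection problem
    (ε : ℝ) (hε : 1 ≤ ε)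
    (E' : Finset (Fin p × Fin m)) (hE'_sub : E' ⊆ Emin)
    (hE'_feas : ∀ x : X, classOnCycle EX fU fY E' x)
    (hE'_eps : fcost P E' ≤ ε * fcost P Eopt) :
    fcost P E' ≤ ε * fcost P Kstar := by
  classical
  choose f hf1 hf2 hf3 hf4 using fun e : Fin p × Fin m => hEmin e.1 e.2
  set E₁ : Finset (Fin p × Fin m) := Kstar.image f with hE₁
  have hrep : ∀ e ∈ Kstar, ∃ e' ∈ E₁,
      mreach EX (fY e.1) (fY e'.1) ∧ mreach EX (fU e.2) (fU e'.2) :=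
    fun e he => ⟨f e, Finset.mem_image_of_mem f he, hf3 e, hf4 e⟩
  -- feasibility of E₁ for the cycle selection problem
  have hfeas : ∀ x : X, classOnCycle EX fU fY E₁ x := by
    intro x
    obtain ⟨e, heK, hmY, hmU⟩ := hK_feas x
    obtain ⟨e', he'E, hYe, hUe⟩ := hrep e heK
    -- simulate the forward path  inl x →* out e.1
    obtain ⟨b₂, hb₂, hpath⟩ := sim hrep hmY.1 x (mreach_refl x)
    have hb₂' : mreach EX (fY e.1) b₂ := hb₂
    -- simulate the backward path  in e.2 →* inl x
    obtain ⟨b₃, hb₃, hret⟩ := sim hrep hmU.2 (fU e'.2)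
      (show mreach EX (fU e.2) (fU e'.2) from hUe)
    have hb₃' : mreach EX x b₃ := hb₃
    -- path from  in e'.2  back to  inl x  in the condensed digraph
    have hback : Relation.ReflTransGen (cedge EX fU fY E₁)
        (Sum.inr (Sum.inl e'.2)) (Sum.inl x) := by
      by_cases hveq : veq (m := m) (p := p) EX (Sum.inl (fU e'.2)) (Sum.inl x)
      · exact Relation.ReflTransGen.single (cedge_in_state' hveq)
      · exact (Relation.ReflTransGen.single (cedge_in_state e'.2)).trans
          (rtg_cedge_retarget hret (veq_inl (mreach_symm hb₃')) hveq)
    -- path from  inl x  to  out e'.1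
    have hQ : Relation.ReflTransGen (cedge EX fU fY E₁) (Sum.inl x)
        (Sum.inr (Sum.inr e'.1)) :=
      hpath.tail (cedge_state_out (mreach_trans (mreach_symm hb₂') hYe))
    rcases hQ.cases_head with heq | ⟨c, hc, hcs⟩
    · simp at heq
    · exact ⟨c, hc, hcs.trans ((Relation.ReflTransGen.single
        (cedge_out_in he'E)).trans hback)⟩
  have hsub : E₁ ⊆ Emin := Finset.image_subset_iff.2 fun e _ => hf1 e
  have hcost : fcost P E₁ ≤ fcost P Kstar := by
    calc fcost P E₁ ≤ ∑ e ∈ Kstar, P (f e).2 (f e).1 :=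
          sum_image_le' Kstar f (fun e => P e.2 e.1) (fun e => hP _ _)
      _ ≤ ∑ e ∈ Kstar, P e.2 e.1 := Finset.sum_le_sum (fun e _ => hf2 e)
      _ = fcost P Kstar := rfl
  have h1 : fcost P Eopt ≤ fcost P Kstar := (hEopt_opt E₁ hsub hfeas).trans hcost
  calc fcost P E' ≤ ε * fcost P Eopt := hE'_eps
    _ ≤ ε * fcost P Kstar := mul_le_mul_of_nonneg_left h1 (by linarith)
end

section
/- Let C_opt be an optimal cycle cover of the node set N with total edge cost c(E_opt), and let k̃₁ be the maximum multiplicity of any feedback edge across the cycles in C_opt (the number of cycles of C_opt containing that edge). Then the greedy algorithm that repeatedly selects a cycle minimizing (cost of its remaining feedback edges)/(number of its uncovered nodes) returns an edge set H covering all nodes with c(H) ≤ k̃₁ · (1 + log|N|) · c(E_opt). -/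
/-- The nodes covered after the first `k` cycles chosen by the greedy
algorithm. -/
def covNodes {α β : Type*} [DecidableEq α]
    (L : List (Finset α × Finset β)) (k : ℕ) : Finset α :=
  ((L.take k).map Prod.fst).foldr (· ∪ ·) ∅

/-- The feedback edges selected after the first `k` cycles chosen by the
greedy algorithm. -/
def selEdges {α β : Type*} [DecidableEq β]
    (L : List (Finset α × Finset β)) (k : ℕ) : Finset β :=
  ((L.take k).map Prod.snd).foldr (· ∪ ·) ∅

lemma foldr_union_init {γ : Type*} [DecidableEq γ] (A : List (Finset γ)) (b : Finset γ) :
    A.foldr (· ∪ ·) b = A.foldr (· ∪ ·) ∅ ∪ b := by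
  induction A with
  | nil => simp
  | cons a t ih => simp [ih, Finset.union_assoc]

lemma covNodes_zero {α β : Type*} [DecidableEq α] (L : List (Finset α × Finset β)) :
    covNodes L 0 = ∅ := by simp [covNodes]

lemma selEdges_zero {α β : Type*} [DecidableEq β] (L : List (Finset α × Finset β)) :
    selEdges L 0 = ∅ := by simp [selEdges]

lemma covNodes_succ {α β : Type*} [DecidableEq α] (L : List (Finset α × Finset β))
    (k : ℕ) (hk : k < L.length) :
    covNodes L (k+1) = covNodes L k ∪ (L.get ⟨k, hk⟩).1 := by
  unfold covNodes
  rw [List.take_succ, List.getElem?_eq_getElem hk, List.map_append, List.foldr_append,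
    foldr_union_init]
  simp

lemma selEdges_succ {α β : Type*} [DecidableEq α] [DecidableEq β]
    (L : List (Finset α × Finset β)) (k : ℕ) (hk : k < L.length) :
    selEdges L (k+1) = selEdges L k ∪ (L.get ⟨k, hk⟩).2 := by
  unfold selEdges
  rw [List.take_succ, List.getElem?_eq_getElem hk, List.map_append, List.foldr_append,
    foldr_union_init]
  simp

lemma log_ratio_bound (a b : ℕ) (hb : 1 ≤ b) (hab : b ≤ a) :
    ((a - b : ℕ) : ℝ) / a ≤ Real.log a - Real.log b := by
  have ha0 : 0 < a := by omega
  have ha : (0:ℝ) < a := by exact_mod_cast ha0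
  have hb' : (0:ℝ) < b := by exact_mod_cast hb
  have h1 : Real.log ((b:ℝ)/a) ≤ (b:ℝ)/a - 1 := Real.log_le_sub_one_of_pos (by positivity)
  rw [Real.log_div (ne_of_gt hb') (ne_of_gt ha)] at h1
  have hcast : ((a - b : ℕ) : ℝ) = (a:ℝ) - b := by
    push_cast [hab]; ring
  rw [hcast, sub_div, div_self (ne_of_gt ha)]
  linarith

lemma telescope (u d : ℕ → ℕ) :
    ∀ n, (∀ k < n, 1 ≤ d k ∧ d k ≤ u k ∧ u (k+1) = u k - d k) →
    ∑ k ∈ Finset.range n, (d k : ℝ) / (u k) ≤ 1 + Real.log (u 0) := by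
  intro n
  induction n generalizing u d with
  | zero =>
    intro _
    simp
    positivity
  | succ n ih =>
    intro h
    obtain ⟨hd0, hdu0, hu1⟩ := h 0 (Nat.succ_pos n)
    norm_num at hu1
    have hu0 : 1 ≤ u 0 := le_trans hd0 hdu0
    have hu0' : (0:ℝ) < u 0 := by exact_mod_cast hu0
    rw [Finset.sum_range_succ']
    have IH := ih (fun k => u (k+1)) (fun k => d (k+1))
      (fun k hk => h (k+1) (by omega))
    by_cases h1 : 1 ≤ u 1
    · have key : (d 0 : ℝ) / u 0 ≤ Real.log (u 0) - Real.log (u 1) := by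
        have h2 := log_ratio_bound (u 0) (u 1) h1 (by omega)
        have hd : d 0 = u 0 - u 1 := by omega
        rw [hd]; exact h2
      linarith [IH]
    · have hu1z : u 1 = 0 := by omega
      have hn : n = 0 := by
        by_contra hn
        obtain ⟨a, b, _⟩ := h 1 (by omega)
        omega
      subst hn
      simp only [Finset.range_zero, Finset.sum_empty, zero_add]
      have hd : (d 0 : ℝ) / u 0 ≤ 1 := by
        rw [div_le_one hu0']
        exact_mod_cast hdu0
      have hlog : 0 ≤ Real.log (u 0) := Real.log_nonneg (by exact_mod_cast hu0)
      linarith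

/-- Let `Copt` be an optimal cycle cover of the node set `N` and
let `k̃₁` be the maximum multiplicity of any feedback edge across the cycles
of `Copt`.  Then the greedy algorithm that repeatedly selects a cycle
minimizing (cost of its remaining feedback edges)/(number of its uncovered
nodes) returns an edge set `H` covering all nodes with
`c(H) ≤ k̃₁ · (1 + log |N|) · c(E_opt)`.  A cycle is a pair
`(node set, feedback edge set)`; the greedy run is recorded as a list `L`. -/
theorem stmt_5 {α β : Type*} [DecidableEq α] [DecidableEq β]
    (N : Finset α) (cycles : Finset (Finset α × Finset β)) (c : β → ℝ)
    (hc : ∀ e, 0 ≤ c e)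
    (hsub : ∀ C ∈ cycles, C.1 ⊆ N)
    -- the greedy run
    (L : List (Finset α × Finset β))
    (hmem : ∀ C ∈ L, C ∈ cycles)
    (hnew : ∀ k : ℕ, (hk : k < L.length) →
      ((L.get ⟨k, hk⟩).1 \ covNodes L k).Nonempty)
    (hgreedy : ∀ k : ℕ, (hk : k < L.length) → ∀ C ∈ cycles,
      (C.1 \ covNodes L k).Nonempty →
        (∑ e ∈ (L.get ⟨k, hk⟩).2 \ selEdges L k, c e) /
            (((L.get ⟨k, hk⟩).1 \ covNodes L k).card : ℝ)
          ≤ (∑ e ∈ C.2 \ selEdges L k, c e) /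
              ((C.1 \ covNodes L k).card : ℝ))
    (hdone : N ⊆ covNodes L L.length)
    -- the optimal cycle cover
    (Copt : Finset (Finset α × Finset β))
    (hCopt_sub : Copt ⊆ cycles)
    (hCopt_cov : N ⊆ Copt.biUnion Prod.fst)
    (hCopt_opt : ∀ C' ⊆ cycles, N ⊆ C'.biUnion Prod.fst →
      ∑ e ∈ Copt.biUnion Prod.snd, c e ≤ ∑ e ∈ C'.biUnion Prod.snd, c e)
    -- the highest multiplicity of an edge in the optimal cover
    (k₁ : ℕ)
    (hk₁ : k₁ = (Copt.biUnion Prod.snd).sup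
      (fun e => (Copt.filter (fun C => e ∈ C.2)).card)) :
    ∑ e ∈ selEdges L L.length, c e
      ≤ (k₁ : ℝ) * (1 + Real.log N.card) * ∑ e ∈ Copt.biUnion Prod.snd, c e := by
  classical
  set n := L.length with hn
  set U : Finset β := Copt.biUnion Prod.snd with hU
  set copt : ℝ := ∑ e ∈ U, c e with hcopt
  have hcopt0 : 0 ≤ copt := Finset.sum_nonneg fun e _ => hc e
  set K : ℝ := (k₁ : ℝ) * copt with hK
  have hK0 : 0 ≤ K := mul_nonneg (Nat.cast_nonneg _) hcopt0
  -- the counting functions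
  set u : ℕ → ℕ := fun k => (N \ covNodes L k).card with hu
  set d : ℕ → ℕ := fun k =>
    if hk : k < n then ((L.get ⟨k, hk⟩).1 \ covNodes L k).card else 1 with hd
  have hd_def : ∀ k (hk : k < n), d k = ((L.get ⟨k, hk⟩).1 \ covNodes L k).card := by
    intro k hk; simp [hd, hk]
  -- step facts
  have hstep : ∀ k, k < n → 1 ≤ d k ∧ d k ≤ u k ∧ u (k+1) = u k - d k := by
    intro k hk
    have hC : L.get ⟨k, hk⟩ ∈ cycles := hmem _ (List.get_mem L ⟨k, hk⟩)
    have hCN : (L.get ⟨k, hk⟩).1 ⊆ N := hsub _ hC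
    have hdk := hd_def k hk
    have hinter : (L.get ⟨k, hk⟩).1 \ covNodes L k = (N \ covNodes L k) ∩ (L.get ⟨k, hk⟩).1 := by
      ext a
      simp only [Finset.mem_sdiff, Finset.mem_inter]
      constructor
      · rintro ⟨h1, h2⟩; exact ⟨⟨hCN h1, h2⟩, h1⟩
      · rintro ⟨⟨_, h2⟩, h3⟩; exact ⟨h3, h2⟩
    refine ⟨?_, ?_, ?_⟩
    · rw [hdk]
      exact Finset.card_pos.2 (hnew k hk)
    · rw [hdk, hinter]
      exact Finset.card_le_card Finset.inter_subset_left
    · have hcs : covNodes L (k+1) = covNodes L k ∪ (L.get ⟨k, hk⟩).1 := covNodes_succ L k hk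
      have hsd : N \ covNodes L (k+1) = (N \ covNodes L k) \ (L.get ⟨k, hk⟩).1 := by
        rw [hcs]; exact (sdiff_sdiff N (covNodes L k) (L.get ⟨k, hk⟩).1).symm
      have hcards := Finset.card_sdiff_add_card_inter (N \ covNodes L k) (L.get ⟨k, hk⟩).1
      have : u (k+1) = ((N \ covNodes L k) \ (L.get ⟨k, hk⟩).1).card := by
        simp only [hu]; rw [hsd]
      have huk : u k = (N \ covNodes L k).card := rfl
      rw [this, hdk, hinter, huk]
      omega
  -- per-step greedy cost bound
  have hstepbound : ∀ k (hk : k < n),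
      (∑ e ∈ (L.get ⟨k, hk⟩).2 \ selEdges L k, c e) ≤ K * ((d k : ℝ) / (u k)) := by
    intro k hk
    obtain ⟨hd1, hdu, _⟩ := hstep k hk
    have hupos : 0 < u k := lt_of_lt_of_le hd1 hdu
    have hureal : (0:ℝ) < (u k : ℝ) := by exact_mod_cast hupos
    set S : Finset (Finset α × Finset β) :=
      Copt.filter (fun C => (C.1 \ covNodes L k).Nonempty) with hS
    -- the uncovered nodes are covered by S
    have hcover : (N \ covNodes L k) ⊆ S.biUnion (fun C => C.1 \ covNodes L k) := by
      intro y hy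
      rw [Finset.mem_sdiff] at hy
      obtain ⟨C, hCopt, hyC⟩ := Finset.mem_biUnion.1 (hCopt_cov hy.1)
      have hyCd : y ∈ C.1 \ covNodes L k := Finset.mem_sdiff.2 ⟨hyC, hy.2⟩
      exact Finset.mem_biUnion.2 ⟨C, Finset.mem_filter.2 ⟨hCopt, ⟨y, hyCd⟩⟩, hyCd⟩
    have hSne : S.Nonempty := by
      obtain ⟨y, hy⟩ := Finset.card_pos.1 hupos
      obtain ⟨C, hCS, _⟩ := Finset.mem_biUnion.1 (hcover hy)
      exact ⟨C, hCS⟩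
    have h1 : (u k : ℝ) ≤ ∑ C ∈ S, ((C.1 \ covNodes L k).card : ℝ) := by
      have h1a : u k ≤ (S.biUnion (fun C => C.1 \ covNodes L k)).card :=
        Finset.card_le_card hcover
      have h1b := Finset.card_biUnion_le (s := S) (t := fun C => C.1 \ covNodes L k)
      have : (u k : ℕ) ≤ ∑ C ∈ S, (C.1 \ covNodes L k).card := le_trans h1a h1b
      exact_mod_cast this
    -- total cost of cycles in S is at most K
    have h2 : ∑ C ∈ S, (∑ e ∈ C.2, c e) ≤ K := by
      have h2a : ∑ C ∈ S, (∑ e ∈ C.2, c e) ≤ ∑ C ∈ Copt, (∑ e ∈ C.2, c e) :=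
        Finset.sum_le_sum_of_subset_of_nonneg (Finset.filter_subset _ _)
          (fun C _ _ => Finset.sum_nonneg fun e _ => hc e)
      have h2b : ∑ C ∈ Copt, (∑ e ∈ C.2, c e)
          = ∑ e ∈ U, ((Copt.filter (fun C => e ∈ C.2)).card : ℝ) * c e := by
        have hrow : ∀ C ∈ Copt, ∑ e ∈ C.2, c e = ∑ e ∈ U, if e ∈ C.2 then c e else 0 := by
          intro C hC
          rw [Finset.sum_ite_mem U C.2 c,
            Finset.inter_eq_right.2 (Finset.subset_biUnion_of_mem Prod.snd hC)]
        rw [Finset.sum_congr rfl hrow, Finset.sum_comm]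
        refine Finset.sum_congr rfl fun e _ => ?_
        rw [← Finset.sum_filter, Finset.sum_const, nsmul_eq_mul]
      have h2c : ∑ e ∈ U, ((Copt.filter (fun C => e ∈ C.2)).card : ℝ) * c e ≤ K := by
        rw [hK, hcopt, Finset.mul_sum]
        refine Finset.sum_le_sum fun e he => ?_
        refine mul_le_mul_of_nonneg_right ?_ (hc e)
        have hle : (Copt.filter (fun C => e ∈ C.2)).card ≤ k₁ := by
          rw [hk₁]
          exact Finset.le_sup (f := fun a => (Finset.filter (fun C => a ∈ C.2) Copt).card) he
        exact_mod_cast hle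
      calc ∑ C ∈ S, (∑ e ∈ C.2, c e) ≤ ∑ C ∈ Copt, (∑ e ∈ C.2, c e) := h2a
        _ = _ := h2b
        _ ≤ K := h2c
    -- averaging: some cycle in S has small ratio
    have hexists : ∃ C ∈ S,
        (∑ e ∈ C.2, c e) / ((C.1 \ covNodes L k).card : ℝ) ≤ K / (u k : ℝ) := by
      by_contra hcon
      push_neg at hcon
      have hlt : ∀ C ∈ S, K / (u k : ℝ) * ((C.1 \ covNodes L k).card : ℝ) < ∑ e ∈ C.2, c e := by
        intro C hCS
        have hCne : (C.1 \ covNodes L k).Nonempty := (Finset.mem_filter.1 hCS).2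
        have hdC : (0:ℝ) < ((C.1 \ covNodes L k).card : ℝ) := by
          exact_mod_cast Finset.card_pos.2 hCne
        exact (lt_div_iff₀ hdC).1 (hcon C hCS)
      have hsumlt : ∑ C ∈ S, K / (u k : ℝ) * ((C.1 \ covNodes L k).card : ℝ)
          < ∑ C ∈ S, (∑ e ∈ C.2, c e) := Finset.sum_lt_sum_of_nonempty hSne hlt
      have hfac : ∑ C ∈ S, K / (u k : ℝ) * ((C.1 \ covNodes L k).card : ℝ)
          = K / (u k : ℝ) * ∑ C ∈ S, ((C.1 \ covNodes L k).card : ℝ) := by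
        rw [Finset.mul_sum]
      have hge : K ≤ ∑ C ∈ S, K / (u k : ℝ) * ((C.1 \ covNodes L k).card : ℝ) := by
        rw [hfac]
        have := mul_le_mul_of_nonneg_left h1 (div_nonneg hK0 (le_of_lt hureal))
        calc K = K / (u k : ℝ) * (u k : ℝ) := by field_simp
          _ ≤ _ := this
      linarith
    obtain ⟨C, hCS, hratio⟩ := hexists
    have hCmem : C ∈ cycles := hCopt_sub (Finset.mem_filter.1 hCS).1
    have hCne : (C.1 \ covNodes L k).Nonempty := (Finset.mem_filter.1 hCS).2
    have hgr := hgreedy k hk C hCmem hCne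
    have hdC : (0:ℝ) < ((C.1 \ covNodes L k).card : ℝ) := by
      exact_mod_cast Finset.card_pos.2 hCne
    have hmono : (∑ e ∈ C.2 \ selEdges L k, c e) ≤ ∑ e ∈ C.2, c e :=
      Finset.sum_le_sum_of_subset_of_nonneg (Finset.sdiff_subset) (fun e _ _ => hc e)
    have hrho : (∑ e ∈ (L.get ⟨k, hk⟩).2 \ selEdges L k, c e) /
        (((L.get ⟨k, hk⟩).1 \ covNodes L k).card : ℝ) ≤ K / (u k : ℝ) := by
      calc (∑ e ∈ (L.get ⟨k, hk⟩).2 \ selEdges L k, c e) /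
            (((L.get ⟨k, hk⟩).1 \ covNodes L k).card : ℝ)
          ≤ (∑ e ∈ C.2 \ selEdges L k, c e) / ((C.1 \ covNodes L k).card : ℝ) := hgr
        _ ≤ (∑ e ∈ C.2, c e) / ((C.1 \ covNodes L k).card : ℝ) := by gcongr
        _ ≤ K / (u k : ℝ) := hratio
    -- turn ratio bound into cost bound
    have hdreal : (0:ℝ) < (d k : ℝ) := by exact_mod_cast hd1
    have hdcast : ((d k : ℕ) : ℝ) = (((L.get ⟨k, hk⟩).1 \ covNodes L k).card : ℝ) := by
      exact_mod_cast congrArg Nat.cast (hd_def k hk)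
    have := mul_le_mul_of_nonneg_right hrho (le_of_lt hdreal)
    rw [hdcast] at this ⊢
    calc (∑ e ∈ (L.get ⟨k, hk⟩).2 \ selEdges L k, c e)
        = (∑ e ∈ (L.get ⟨k, hk⟩).2 \ selEdges L k, c e) /
            (((L.get ⟨k, hk⟩).1 \ covNodes L k).card : ℝ) *
            (((L.get ⟨k, hk⟩).1 \ covNodes L k).card : ℝ) := by
          rw [div_mul_cancel₀]
          rw [← hdcast]; exact ne_of_gt hdreal
      _ ≤ K / (u k : ℝ) * (((L.get ⟨k, hk⟩).1 \ covNodes L k).card : ℝ) := this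
      _ = K * ((((L.get ⟨k, hk⟩).1 \ covNodes L k).card : ℝ) / (u k : ℝ)) := by ring
  -- total cost bound by induction
  have htotal : ∀ m, m ≤ n →
      ∑ e ∈ selEdges L m, c e ≤ ∑ k ∈ Finset.range m, K * ((d k : ℝ) / (u k)) := by
    intro m
    induction m with
    | zero => intro _; simp [selEdges_zero]
    | succ m ih =>
      intro hm
      have hmn : m < n := hm
      have hse : selEdges L (m+1) = selEdges L m ∪ ((L.get ⟨m, hmn⟩).2 \ selEdges L m) := by
        rw [selEdges_succ L m hmn, Finset.union_sdiff_self_eq_union]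
      rw [hse, Finset.sum_union Finset.disjoint_sdiff, Finset.sum_range_succ]
      have hsb := hstepbound m hmn
      have := ih (le_of_lt hmn)
      linarith [hsb, this]
  -- assemble
  have hmain := htotal n le_rfl
  have htel := telescope u d n hstep
  have hu0 : u 0 = N.card := by simp [hu, covNodes_zero]
  have hfinal : ∑ k ∈ Finset.range n, K * ((d k : ℝ) / (u k)) ≤ K * (1 + Real.log N.card) := by
    rw [← Finset.mul_sum]
    refine mul_le_mul_of_nonneg_left ?_ hK0
    rw [← hu0]
    exact htel
  calc ∑ e ∈ selEdges L n, c e ≤ _ := hmain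
    _ ≤ K * (1 + Real.log N.card) := hfinal
    _ = (k₁ : ℝ) * (1 + Real.log N.card) * copt := by rw [hK]; ring
end

section
/- In an arborescence, a directed edge (y_b, u_a) from a descendant of node N to an ancestor of N covers exactly the nodes on the unique directed path from the SCC attached to u_a to the SCC attached to y_b; hence the set of nodes of Tree(N) not covered by (y_b,u_a) forms a disjoint union of subtrees of Tree(N). -/
section
variable {V β : Type*}

/-- The edge relation of an arborescence with root `r` and parent map `par`:
there is an edge from each node to each of its (non-root) children. -/
def treeEdge (par : V → V) (r : V) (a b : V) : Prop := b ≠ r ∧ par b = a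

/-- A feedback edge `e`, whose input attaches to the SCC-node `ain e` and
whose output attaches to the SCC-node `aout e`, covers the node `N` of the
arborescence iff `ain e` is an ancestor of `N` and `aout e` is a descendant
of `N` (so that adding the edge puts `N` on a directed cycle). -/
def covers (par : V → V) (r : V) (ain aout : β → V) (e : β) (N : V) : Prop :=
  Relation.ReflTransGen (treeEdge par r) (ain e) N ∧
    Relation.ReflTransGen (treeEdge par r) N (aout e)

end

section Aux
open Relation

variable {V : Type*} {par : V → V} {r : V}

lemma reach_of_iter (hroot : par r = r) :
    ∀ (n : ℕ) (b : V), ReflTransGen (treeEdge par r) (par^[n] b) b := by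
  intro n
  induction n with
  | zero => intro b; exact .refl
  | succ n ih =>
    intro b
    rw [Function.iterate_succ_apply]
    by_cases hb : b = r
    · subst hb; rw [hroot]; exact ih _
    · exact (ih (par b)).tail ⟨hb, rfl⟩

lemma iter_of_reach {a b : V} (h : ReflTransGen (treeEdge par r) a b) :
    ∃ n, par^[n] b = a := by
  induction h with
  | refl => exact ⟨0, rfl⟩
  | tail _ hedge ih =>
    obtain ⟨n, hn⟩ := ih
    exact ⟨n + 1, by rw [Function.iterate_succ_apply, hedge.2, hn]⟩

lemma reach_antisymm (hroot : par r = r) (hreach : ∀ v : V, ∃ n : ℕ, par^[n] v = r)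
    {a b : V} (hab : ReflTransGen (treeEdge par r) a b)
    (hba : ReflTransGen (treeEdge par r) b a) : a = b := by
  obtain ⟨n, hn⟩ := iter_of_reach hab
  obtain ⟨m, hm⟩ := iter_of_reach hba
  have hper : par^[m + n] b = b := by
    rw [Function.iterate_add_apply, hn, hm]
  rcases Nat.eq_zero_or_pos (m + n) with h0 | hpos
  · obtain ⟨hm0, hn0⟩ := Nat.add_eq_zero.mp h0
    subst hn0; simpa using hn.symm
  · obtain ⟨K, hK⟩ := hreach b
    have hbig : par^[(m + n) * K] b = b := by
      rw [Function.iterate_mul]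
      exact Function.iterate_fixed hper K
    have hKle : K ≤ (m + n) * K := Nat.le_mul_of_pos_left K hpos
    have hbr : b = r := by
      have : par^[(m + n) * K] b = par^[(m + n) * K - K] (par^[K] b) := by
        rw [← Function.iterate_add_apply, Nat.sub_add_cancel hKle]
      rw [hbig, hK, Function.iterate_fixed hroot] at this
      exact this
    subst hbr
    rw [Function.iterate_fixed hroot] at hn
    rw [← hn]

lemma reach_total (hroot : par r = r) {x y v : V}
    (hx : ReflTransGen (treeEdge par r) x v) (hy : ReflTransGen (treeEdge par r) y v) :
    ReflTransGen (treeEdge par r) x y ∨ ReflTransGen (treeEdge par r) y x := by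
  obtain ⟨n, hn⟩ := iter_of_reach hx
  obtain ⟨m, hm⟩ := iter_of_reach hy
  rcases le_total n m with h | h
  · right
    have : par^[m - n] x = y := by
      rw [← hn, ← Function.iterate_add_apply, Nat.sub_add_cancel h, hm]
    rw [← this]; exact reach_of_iter hroot _ _
  · left
    have : par^[n - m] y = x := by
      rw [← hm, ← Function.iterate_add_apply, Nat.sub_add_cancel h, hn]
    rw [← this]; exact reach_of_iter hroot _ _

lemma aux_decomp {A D x y : V}
    (h : ReflTransGen (fun a b => treeEdge par r a b ∨ (a = D ∧ b = A)) x y) :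
    ReflTransGen (treeEdge par r) x y ∨
      (ReflTransGen (treeEdge par r) x D ∧ ReflTransGen (treeEdge par r) A y) := by
  induction h with
  | refl => exact Or.inl .refl
  | tail _ hedge ih =>
    rcases hedge with he | ⟨h1, h2⟩
    · rcases ih with h' | ⟨hxD, hAy⟩
      · exact Or.inl (h'.tail he)
      · exact Or.inr ⟨hxD, hAy.tail he⟩
    · subst h1; subst h2
      rcases ih with h' | ⟨hxD, _⟩
      · exact Or.inr ⟨h', .refl⟩
      · exact Or.inr ⟨hxD, .refl⟩

end Aux


/-- In an arborescence, adding a directed edge from `D` (a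
descendant of the node `N`, where the output `y_b` attaches) to `A` (an
ancestor of `N`, where the input `u_a` attaches) creates directed cycles
exactly through the nodes of the unique directed path from `A` to `D`; hence
such an edge covers exactly the nodes on that path, and the set of nodes of
`Tree(N)` not covered by the edge forms a disjoint union of subtrees of
`Tree(N)`. -/
theorem stmt_15 {V : Type*} (par : V → V) (r : V)
    (hroot : par r = r) (hreach : ∀ v : V, ∃ n : ℕ, par^[n] v = r)
    (N A D : V)
    (hA : Relation.ReflTransGen (treeEdge par r) A N)
    (hD : Relation.ReflTransGen (treeEdge par r) N D) :
    -- the augmented digraph: tree edges together with the edge (D, A)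
    letI R : V → V → Prop := fun a b => treeEdge par r a b ∨ (a = D ∧ b = A)
    -- a node is covered iff it lies on a directed cycle of the augmented
    -- digraph, iff it lies on the unique directed path from A to D
    (∀ v : V, (∃ u, R v u ∧ Relation.ReflTransGen R u v) ↔
      (Relation.ReflTransGen (treeEdge par r) A v ∧
        Relation.ReflTransGen (treeEdge par r) v D)) ∧
    -- the uncovered nodes of Tree(N) form a disjoint union of subtrees
    (∃ roots : Set V,
      (∀ M ∈ roots, Relation.ReflTransGen (treeEdge par r) N M) ∧
      (∀ v : V, (Relation.ReflTransGen (treeEdge par r) N v ∧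
          ¬ (Relation.ReflTransGen (treeEdge par r) A v ∧
            Relation.ReflTransGen (treeEdge par r) v D)) ↔
        ∃ M ∈ roots, Relation.ReflTransGen (treeEdge par r) M v) ∧
      (∀ M ∈ roots, ∀ M' ∈ roots, M ≠ M' → ∀ v : V,
        Relation.ReflTransGen (treeEdge par r) M v →
          ¬ Relation.ReflTransGen (treeEdge par r) M' v)) := by
  classical
  have lift : ∀ {x y : V}, Relation.ReflTransGen (treeEdge par r) x y →
      Relation.ReflTransGen (fun a b => treeEdge par r a b ∨ (a = D ∧ b = A)) x y :=
    fun h => Relation.ReflTransGen.mono (fun _ _ he => Or.inl he) _ _ h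
  constructor
  · -- part 1
    intro v
    constructor
    · rintro ⟨u, hvu, huv⟩
      rcases hvu with he | ⟨h1, h2⟩
      · rcases aux_decomp huv with huv' | ⟨huD, hAv⟩
        · -- u ⟶* v and v → u : contradiction
          exfalso
          have hvu' : Relation.ReflTransGen (treeEdge par r) v u :=
            Relation.ReflTransGen.single he
          have huv2 := reach_antisymm hroot hreach huv' hvu'
          -- u = v, so par u = u
          have hfix : par u = u := by rw [he.2, huv2]
          obtain ⟨n, hn⟩ := hreach u
          rw [Function.iterate_fixed hfix] at hn
          exact he.1 hn
        · exact ⟨hAv, (Relation.ReflTransGen.single he).trans huD⟩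
      · subst h1; subst h2
        rcases aux_decomp huv with hAD | ⟨hAD, _⟩
        · exact ⟨hAD, .refl⟩
        · exact ⟨hAD, .refl⟩
    · rintro ⟨hAv, hvD⟩
      rcases hvD.cases_head with heq | ⟨c, hvc, hcD⟩
      · subst heq
        exact ⟨A, Or.inr ⟨rfl, rfl⟩, lift hAv⟩
      · refine ⟨c, Or.inl hvc, ?_⟩
        exact ((lift hcD).tail (Or.inr ⟨rfl, rfl⟩)).trans (lift hAv)
  · -- part 2
    refine ⟨{M | Relation.ReflTransGen (treeEdge par r) N M ∧
        ¬ Relation.ReflTransGen (treeEdge par r) M D ∧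
        Relation.ReflTransGen (treeEdge par r) (par M) D}, ?_, ?_, ?_⟩
    · exact fun M hM => hM.1
    · intro v
      constructor
      · rintro ⟨hNv, hnc⟩
        have hvD : ¬ Relation.ReflTransGen (treeEdge par r) v D := by
          intro h; exact hnc ⟨(hA.trans hNv), h⟩
        obtain ⟨n, hn⟩ := iter_of_reach hNv
        have hex : ∃ k, Relation.ReflTransGen (treeEdge par r) (par^[k] v) D :=
          ⟨n, by rw [hn]; exact hD⟩
        set k := Nat.find hex with hkdef
        have hk0 : k ≠ 0 := by
          intro h0
          have := Nat.find_spec hex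
          rw [← hkdef] at this  -- noop
          rw [h0] at this
          exact hvD this
        refine ⟨par^[k - 1] v, ⟨?_, ?_, ?_⟩, reach_of_iter hroot _ _⟩
        · -- N ⟶* M
          have hkn : k ≤ n := Nat.find_le (by rw [hn]; exact hD)
          have : par^[n - (k - 1)] (par^[k - 1] v) = N := by
            rw [← Function.iterate_add_apply,
              Nat.sub_add_cancel (le_trans (Nat.sub_le k 1) hkn), hn]
          rw [← this]; exact reach_of_iter hroot _ _
        · exact Nat.find_min hex (Nat.pred_lt hk0)
        · have : par (par^[k - 1] v) = par^[k] v := by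
            conv_rhs => rw [show k = (k - 1) + 1 from (Nat.succ_pred_eq_of_ne_zero hk0).symm]
            rw [Function.iterate_succ_apply']
          rw [this]
          exact Nat.find_spec hex
      · rintro ⟨M, ⟨hNM, hMD, _⟩, hMv⟩
        refine ⟨hNM.trans hMv, ?_⟩
        rintro ⟨_, hvD⟩
        exact hMD (hMv.trans hvD)
    · -- disjointness
      have key : ∀ M, M ∈ {M | Relation.ReflTransGen (treeEdge par r) N M ∧
          ¬ Relation.ReflTransGen (treeEdge par r) M D ∧
          Relation.ReflTransGen (treeEdge par r) (par M) D} →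
          ∀ M', M' ∈ {M | Relation.ReflTransGen (treeEdge par r) N M ∧
          ¬ Relation.ReflTransGen (treeEdge par r) M D ∧
          Relation.ReflTransGen (treeEdge par r) (par M) D} →
          M ≠ M' → Relation.ReflTransGen (treeEdge par r) M M' → False := by
        rintro M ⟨_, hMD, _⟩ M' ⟨_, _, hM'D⟩ hne hMM'
        obtain ⟨k, hk⟩ := iter_of_reach hMM'
        have hk0 : k ≠ 0 := by
          intro h0; rw [h0] at hk; exact hne hk.symm
        have : par^[k - 1] (par M') = M := by
          rw [← Function.iterate_succ_apply, Nat.succ_eq_add_one,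
            Nat.sub_add_cancel (Nat.one_le_iff_ne_zero.mpr hk0), hk]
        have hMparM' : Relation.ReflTransGen (treeEdge par r) M (par M') := by
          rw [← this]; exact reach_of_iter hroot _ _
        exact hMD (hMparM'.trans hM'D)
      intro M hM M' hM' hne v hMv hM'v
      rcases reach_total hroot hMv hM'v with h | h
      · exact key M hM M' hM' hne h
      · exact key M' hM' M hM hne.symm h
end
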